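/- arXiv:1401.7633 — 2 statements merged into one kernel-verified Lean document; each statement's English description precedes it below -/
import Mathlib

section
/- Let ξ ∈ L^∞(𝕋) be real-valued and T_ξ : H² → H², F ↦ P₊(ξ F), the Toeplitz operator with symbol ξ. If μ ∈ ℝ is such that T_ξ - μ I is invertible on H², then ξ - μ has constant sign a.e. on 𝕋 (either ξ - μ > 0 a.e. or ξ - μ < 0 a.e.). Consequently, the spectrum of T_ξ equals [ess inf ξ, ess sup ξ]. -/
open MeasureTheory Complex
open scoped Real ENNReal
noncomputable section

instance : Fact (0 < 2 * π) := ⟨by positivity⟩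
/-- The unit circle, as `ℝ / 2πℤ`. -/
abbrev Circ := AddCircle (2 * π)
/-- Normalized arclength (Haar) measure on the circle. -/
abbrev μm : Measure Circ := AddCircle.haarAddCircle
/-- Membership in the Hardy space `H²`. -/
def Hardy (f : Lp ℂ 2 μm) : Prop := ∀ n : ℤ, n < 0 → fourierCoeff (⇑f) n = 0

open scoped ComplexConjugate NNReal

namespace HW

lemma fourierCoeff_congr {f g : Circ → ℂ} (h : f =ᵐ[μm] g) (n : ℤ) :
    fourierCoeff f n = fourierCoeff g n :=
  integral_congr_ae (h.mono fun x hx => by simp only []; rw [hx])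

lemma integral_fourier {n : ℤ} (hn : n ≠ 0) : ∫ x, fourier n x ∂μm = 0 :=
  integral_eq_zero_of_add_right_eq_neg (fourier_add_half_inv_index hn Real.two_pi_pos)

lemma norm_fourier (n : ℤ) (x : Circ) : ‖fourier n x‖ = 1 := by
  simp [fourier_apply, Circle.norm_coe]

lemma memLp_mulF (n : ℤ) (f : Lp ℂ 2 μm) :
    MemLp (fun x => fourier n x * f x) 2 μm := by
  refine (Lp.memLp f).of_le
    (((fourier n).continuous.aestronglyMeasurable).mul (Lp.aestronglyMeasurable f))
    (Filter.Eventually.of_forall fun x => ?_)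
  rw [norm_mul, norm_fourier, one_mul]

/-- multiplication by `fourier n` as an element of `Lp`. -/
def mulF (n : ℤ) (f : Lp ℂ 2 μm) : Lp ℂ 2 μm := (memLp_mulF n f).toLp _

lemma coeFn_mulF (n : ℤ) (f : Lp ℂ 2 μm) :
    ⇑(mulF n f) =ᵐ[μm] fun x => fourier n x * f x := (memLp_mulF n f).coeFn_toLp

lemma fourierCoeff_mul_fourier (k : ℤ) (w : Circ → ℂ) (m : ℤ) :
    fourierCoeff (fun x => fourier k x * w x) m = fourierCoeff w (m - k) := by
  unfold fourierCoeff
  refine integral_congr_ae (Filter.Eventually.of_forall fun x => ?_)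
  have h : fourier (-(m - k)) x = fourier (-m) x * fourier k x := by
    rw [show -(m - k) = -m + k by ring, fourier_add]
  simp only [smul_eq_mul, h]
  ring

lemma fourierCoeff_mulF (n : ℤ) (f : Lp ℂ 2 μm) (m : ℤ) :
    fourierCoeff (⇑(mulF n f)) m = fourierCoeff (⇑f) (m - n) := by
  rw [fourierCoeff_congr (coeFn_mulF n f), fourierCoeff_mul_fourier]

lemma hardy_mulF {n : ℤ} (hn : 0 ≤ n) {f : Lp ℂ 2 μm} (hf : Hardy f) :
    Hardy (mulF n f) := fun m hm => by
  rw [fourierCoeff_mulF]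
  exact hf _ (by omega)

/-- real symmetry of Fourier coefficients -/
lemma fourierCoeff_real_symm (h : Circ → ℝ) (n : ℤ) :
    fourierCoeff (fun x => (h x : ℂ)) (-n) = conj (fourierCoeff (fun x => (h x : ℂ)) n) := by
  unfold fourierCoeff
  rw [← integral_conj]
  refine integral_congr_ae (Filter.Eventually.of_forall fun x => ?_)
  simp only [smul_eq_mul, map_mul, Complex.conj_ofReal, ← fourier_neg, neg_neg]

end HW

namespace HW

lemma ae_zero_of_tests (g : Circ → ℝ) (hgi : Integrable g μm)
    (hg : ∀ φ : C(Circ, ℂ), ∫ x, (g x : ℂ) * φ x ∂μm = 0) :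
    g =ᵐ[μm] 0 := by
  -- real-valued tests
  have hgr : ∀ φ : C(Circ, ℝ), ∫ x, g x * φ x ∂μm = 0 := by
    intro φ
    have := hg ⟨fun x => ((φ x : ℝ) : ℂ), Complex.continuous_ofReal.comp φ.continuous⟩
    simp only [ContinuousMap.coe_mk] at this
    have h2 : ∫ x, (g x : ℂ) * (φ x : ℂ) ∂μm = ((∫ x, g x * φ x ∂μm : ℝ) : ℂ) := by
      have h3 : ∫ x, (g x : ℂ) * (φ x : ℂ) ∂μm = ∫ x, ((g x * φ x : ℝ) : ℂ) ∂μm :=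
        integral_congr_ae (Filter.Eventually.of_forall fun x => by push_cast; ring)
      rw [h3]
      exact integral_ofReal
    rw [h2] at this
    exact_mod_cast this
  -- densities
  set dp : Circ → ℝ≥0∞ := fun x => ENNReal.ofReal (g x) with hdp
  set dm : Circ → ℝ≥0∞ := fun x => ENNReal.ofReal (-g x) with hdm
  have hgm : AEMeasurable g μm := hgi.aestronglyMeasurable.aemeasurable
  have hdpm : AEMeasurable dp μm := hgm.ennreal_ofReal
  have hdmm : AEMeasurable dm μm := hgm.neg.ennreal_ofReal
  have hfin : ∀ d : Circ → ℝ≥0∞, (∀ x, d x ≤ ‖g x‖₊) → ∫⁻ x, d x ∂μm ≠ ∞ := by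
    intro d hd
    exact ((lintegral_mono (fun x => hd x)).trans_lt hgi.2).ne
  have hlep : ∀ x, dp x ≤ ‖g x‖₊ := fun x => by
    rw [← ENNReal.ofReal_coe_nnreal, coe_nnnorm]
    exact ENNReal.ofReal_le_ofReal (le_abs_self _)
  have hlem : ∀ x, dm x ≤ ‖g x‖₊ := fun x => by
    rw [← ENNReal.ofReal_coe_nnreal, coe_nnnorm]
    exact ENNReal.ofReal_le_ofReal ((neg_le_abs _))
  haveI hpfin : IsFiniteMeasure (μm.withDensity dp) :=
    isFiniteMeasure_withDensity (hfin _ hlep)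
  haveI hmfin : IsFiniteMeasure (μm.withDensity dm) :=
    isFiniteMeasure_withDensity (hfin _ hlem)
  -- equality of the two measures
  have hmeq : μm.withDensity dp = μm.withDensity dm := by
    apply ext_of_forall_lintegral_eq_of_IsFiniteMeasure
    intro f
    have hφc : Continuous fun x => (f x : ℝ) := NNReal.continuous_coe.comp f.continuous
    set φ : C(Circ, ℝ) := ⟨fun x => (f x : ℝ), hφc⟩ with hφ
    have hφ0 : ∀ x, 0 ≤ φ x := fun x => (f x).2
    -- integrability of pos/neg parts times φ
    have hbd : ∃ C, ∀ x, ‖φ x‖ ≤ C := ⟨‖φ‖, fun x => φ.norm_coe_le_norm x⟩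
    have hip : Integrable (fun x => max (g x) 0 * φ x) μm := by
      have := (hgi.pos_part.bdd_mul (hφc.aestronglyMeasurable)
        (Filter.Eventually.of_forall fun x => φ.norm_coe_le_norm x))
      exact this.congr (Filter.Eventually.of_forall fun x => mul_comm _ _)
    have him : Integrable (fun x => max (-g x) 0 * φ x) μm := by
      have := (hgi.neg.pos_part.bdd_mul (hφc.aestronglyMeasurable)
        (Filter.Eventually.of_forall fun x => φ.norm_coe_le_norm x))
      exact this.congr (Filter.Eventually.of_forall fun x => mul_comm _ _)
    -- the real identity
    have hkey : ∫ x, max (g x) 0 * φ x ∂μm = ∫ x, max (-g x) 0 * φ x ∂μm := by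
      have hsub : ∫ x, (max (g x) 0 * φ x - max (-g x) 0 * φ x) ∂μm = 0 := by
        rw [show (fun x => max (g x) 0 * φ x - max (-g x) 0 * φ x)
            = fun x => g x * φ x from funext fun x => by
          rw [← sub_mul]; congr 1; rcases le_total (g x) 0 with h | h <;>
            [simp [max_eq_right h, max_eq_left (neg_nonneg.2 h)];
             simp [max_eq_left h, max_eq_right (neg_nonpos.2 h)]]]
        exact hgr φ
        
      rw [integral_sub hip him] at hsub
      linarith
    -- convert to lintegrals
    have hl : ∀ (d : Circ → ℝ≥0∞) (hdm : AEMeasurable d μm) (G : Circ → ℝ)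
        (hGd : ∀ x, d x = ENNReal.ofReal (G x)) (hGint : Integrable (fun x => G x * φ x) μm)
        (hG0 : ∀ x, 0 ≤ G x),
        ∫⁻ x, f x ∂(μm.withDensity d) = ENNReal.ofReal (∫ x, G x * φ x ∂μm) := by
      intro d hdm G hGd hGint hG0
      rw [lintegral_withDensity_eq_lintegral_mul₀ hdm
        (f.continuous.measurable.coe_nnreal_ennreal.aemeasurable)]
      · rw [ofReal_integral_eq_lintegral_ofReal hGint
          (Filter.Eventually.of_forall fun x => mul_nonneg (hG0 x) (hφ0 x))]
        refine lintegral_congr fun x => ?_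
        simp only [Pi.mul_apply, hGd x, ENNReal.ofReal_mul (hG0 x)]
        congr 1
        · exact (ENNReal.ofReal_coe_nnreal).symm
    rw [hl dp hdpm (fun x => max (g x) 0)
        (fun x => by
          simp only [hdp]
          rcases le_total (g x) 0 with h | h
          · rw [max_eq_right h, ENNReal.ofReal_eq_zero.2 h, ENNReal.ofReal_zero]
          · rw [max_eq_left h]) hip (fun x => le_max_right _ _),
       hl dm hdmm (fun x => max (-g x) 0)
        (fun x => by
          simp only [hdm]
          rcases le_total (-g x) 0 with h | h
          · rw [max_eq_right h, ENNReal.ofReal_eq_zero.2 h, ENNReal.ofReal_zero]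
          · rw [max_eq_left h]) him (fun x => le_max_right _ _), hkey]
  -- now conclude g = 0 a.e.
  obtain ⟨g', hg'm, hgg'⟩ := hgi.aestronglyMeasurable
  have hgg' : g =ᵐ[μm] g' := hgg'
  have e1 : μm.withDensity dp = μm.withDensity (fun x => ENNReal.ofReal (g' x)) :=
    withDensity_congr_ae (hgg'.mono fun x hx => congrArg ENNReal.ofReal hx)
  have e2 : μm.withDensity dm = μm.withDensity (fun x => ENNReal.ofReal (-g' x)) :=
    withDensity_congr_ae (hgg'.mono fun x hx => congrArg (fun t => ENNReal.ofReal (-t)) hx)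
  have hmeq' : μm.withDensity (fun x => ENNReal.ofReal (g' x))
      = μm.withDensity (fun x => ENNReal.ofReal (-g' x)) := by
    rw [← e1, ← e2]; exact hmeq
  have hside : ∀ (G : Circ → ℝ), StronglyMeasurable G →
      (μm.withDensity (fun x => ENNReal.ofReal (G x))
        = μm.withDensity (fun x => ENNReal.ofReal (-G x))) →
      ∀ᵐ x ∂μm, G x ≤ 0 := by
    intro G hGm heq
    set s : Set Circ := {x | 0 < G x} with hs
    have hsm : MeasurableSet s := measurableSet_lt measurable_const hGm.measurable
    have h1 : ∫⁻ x in s, ENNReal.ofReal (G x) ∂μm = 0 := by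
      have h2 : ∫⁻ x in s, ENNReal.ofReal (-G x) ∂μm = 0 := by
        rw [← lintegral_zero]
        refine setLIntegral_congr_fun hsm (fun x hx => ?_) |>.trans
          (by rw [setLIntegral_const, zero_mul])
        exact ENNReal.ofReal_eq_zero.2 (by simp only [hs, Set.mem_setOf_eq] at hx; linarith)
      calc ∫⁻ x in s, ENNReal.ofReal (G x) ∂μm
          = (μm.withDensity (fun x => ENNReal.ofReal (G x))) s := (withDensity_apply _ hsm).symm
        _ = (μm.withDensity (fun x => ENNReal.ofReal (-G x))) s := by rw [heq]
        _ = ∫⁻ x in s, ENNReal.ofReal (-G x) ∂μm := withDensity_apply _ hsm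
        _ = 0 := h2
    have h3 : (fun x => ENNReal.ofReal (G x)) =ᵐ[μm.restrict s] 0 :=
      (lintegral_eq_zero_iff (hGm.measurable.ennreal_ofReal)).mp h1
    have h4 : ∀ᵐ x ∂μm, x ∈ s → ENNReal.ofReal (G x) = 0 := (ae_restrict_iff' hsm).mp h3
    refine h4.mono fun x hx => ?_
    by_contra hpos
    push_neg at hpos
    have hxs : x ∈ s := hpos
    have := hx hxs
    rw [ENNReal.ofReal_eq_zero] at this
    exact absurd this (not_le.2 hpos)
  have hG1 : ∀ᵐ x ∂μm, g' x ≤ 0 := hside g' hg'm hmeq'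
  have hG2 : ∀ᵐ x ∂μm, -g' x ≤ 0 := by
    refine hside (fun x => -g' x) hg'm.neg ?_
    simpa only [neg_neg] using hmeq'.symm
  filter_upwards [hG1, hG2, hgg'] with x h1 h2 h3
  simp only [Pi.zero_apply]
  rw [h3]; linarith

lemma ae_const_of_fourierCoeff (h : Circ → ℝ) (hh : Integrable h μm)
    (h0 : ∀ n : ℤ, n ≠ 0 → fourierCoeff (fun x => (h x : ℂ)) n = 0) :
    h =ᵐ[μm] fun _ => ∫ y, h y ∂μm := by
  set K : ℝ := ∫ y, h y ∂μm with hK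
  set g : Circ → ℝ := fun x => h x - K with hgdef
  have hgi : Integrable g μm := hh.sub (integrable_const K)
  have hgc : Integrable (fun x => (g x : ℂ)) μm := hgi.ofReal
  -- integrability of g * φ for continuous φ
  have hint : ∀ φ : C(Circ, ℂ), Integrable (fun x => (g x : ℂ) * φ x) μm := by
    intro φ
    exact (hgc.bdd_mul φ.continuous.aestronglyMeasurable
      (Filter.Eventually.of_forall fun x => φ.norm_coe_le_norm x)).congr
      (Filter.Eventually.of_forall fun x => mul_comm _ _)
  -- the linear functional
  set L : C(Circ, ℂ) →ₗ[ℂ] ℂ :=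
    { toFun := fun φ => ∫ x, (g x : ℂ) * φ x ∂μm
      map_add' := by
        intro φ ψ
        simp only [ContinuousMap.coe_add, Pi.add_apply]
        rw [← integral_add (hint φ) (hint ψ)]
        exact integral_congr_ae (Filter.Eventually.of_forall fun x => by ring)
      map_smul' := by
        intro c φ
        simp only [ContinuousMap.coe_smul, Pi.smul_apply, smul_eq_mul, RingHom.id_apply]
        rw [← integral_const_mul]
        exact integral_congr_ae (Filter.Eventually.of_forall fun x => by ring) } with hL
  have hgnormint : Integrable (fun x => ‖g x‖) μm := hgi.norm
  have hLb : ∀ φ : C(Circ, ℂ), ‖L φ‖ ≤ (∫ x, ‖g x‖ ∂μm) * ‖φ‖ := by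
    intro φ
    refine (norm_integral_le_integral_norm _).trans ?_
    rw [← integral_mul_const]
    refine integral_mono (hint φ).norm (hgnormint.mul_const _) fun x => ?_
    rw [norm_mul, Complex.norm_real]
    exact mul_le_mul_of_nonneg_left (φ.norm_coe_le_norm x) (norm_nonneg _)
  set Lc : C(Circ, ℂ) →L[ℂ] ℂ := L.mkContinuous _ hLb with hLc
  have hfour : ∀ n : ℤ, (fourier n : C(Circ, ℂ)) ∈ Lc.ker := by
    intro n
    have hval : Lc (fourier n) = ∫ x, (g x : ℂ) * fourier n x ∂μm := rfl
    rw [LinearMap.mem_ker, ContinuousLinearMap.coe_coe, hval]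
    have hsplit : ∫ x, (g x : ℂ) * fourier n x ∂μm
        = (∫ x, (h x : ℂ) * fourier n x ∂μm) - K * ∫ x, fourier n x ∂μm := by
      rw [← integral_const_mul, ← integral_sub]
      · exact integral_congr_ae (Filter.Eventually.of_forall fun x => by
          simp only [hgdef]; push_cast; ring)
      · exact (hh.ofReal.bdd_mul (fourier n).continuous.aestronglyMeasurable
          (Filter.Eventually.of_forall fun x => le_of_eq (norm_fourier n x))).congr
          (Filter.Eventually.of_forall fun x => mul_comm _ _)
      · exact (integrable_const (K : ℂ)).bdd_mul (fourier n).continuous.aestronglyMeasurable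
          (Filter.Eventually.of_forall fun x => le_of_eq (norm_fourier n x)) |>.congr
          (Filter.Eventually.of_forall fun x => mul_comm _ _)
    rw [hsplit]
    have hcoeff : ∫ x, (h x : ℂ) * fourier n x ∂μm = fourierCoeff (fun x => (h x : ℂ)) (-n) := by
      unfold fourierCoeff
      rw [neg_neg]
      exact integral_congr_ae (Filter.Eventually.of_forall fun x => (smul_eq_mul _ _).trans
        (mul_comm _ _) |>.symm)
    rcases eq_or_ne n 0 with rfl | hn
    · rw [hcoeff]
      have h1 : fourierCoeff (fun x => (h x : ℂ)) (-0) = (K : ℂ) := by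
        have e : fourierCoeff (fun x => (h x : ℂ)) (-0) = ∫ x : Circ, ((h x : ℝ) : ℂ) ∂μm := by
          unfold fourierCoeff
          refine integral_congr_ae (Filter.Eventually.of_forall fun x => ?_)
          show fourier (-(-0)) x • (h x : ℂ) = ((h x : ℝ) : ℂ)
          norm_num [fourier_zero]
        rw [e]
        exact integral_ofReal
      have h2 : ∫ x : Circ, (fourier 0) x ∂μm = 1 := by
        have : ∫ x : Circ, (fourier 0) x ∂μm = ∫ _ : Circ, (1 : ℂ) ∂μm :=
          integral_congr_ae (Filter.Eventually.of_forall fun x => by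
            show fourier 0 x = (1 : ℂ); exact fourier_zero)
        rw [this, integral_const, probReal_univ, one_smul]
      rw [h1, h2, mul_one, sub_self]
    · rw [hcoeff, h0 _ (neg_ne_zero.2 hn), integral_fourier hn, mul_zero, sub_zero]
  have hallC : ∀ φ : C(Circ, ℂ), Lc φ = 0 := by
    have hsp : Submodule.span ℂ (Set.range (@fourier (2 * π))) ≤ Lc.ker := by
      rw [Submodule.span_le]
      rintro - ⟨n, rfl⟩
      exact hfour n
    have hcl : (Submodule.span ℂ (Set.range (@fourier (2 * π)))).topologicalClosure
        ≤ Lc.ker :=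
      Submodule.topologicalClosure_minimal _ hsp (ContinuousLinearMap.isClosed_ker Lc)
    rw [span_fourier_closure_eq_top] at hcl
    intro φ
    exact hcl (Submodule.mem_top (x := φ))
  have := ae_zero_of_tests g hgi (fun φ => hallC φ)
  refine this.mono fun x hx => ?_
  simpa [hgdef, sub_eq_zero] using hx

lemma isUnit_of_coercive {H : Type} [NormedAddCommGroup H] [InnerProductSpace ℂ H]
    [CompleteSpace H] (S : H →L[ℂ] H) {δ : ℝ} (hδ : 0 < δ)
    (hc : ∀ u : H, δ * ‖u‖ ^ 2 ≤ (inner ℂ (S u) u : ℂ).re) : IsUnit S := by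
  have hlow : ∀ u, δ * ‖u‖ ≤ ‖S u‖ := by
    intro u
    rcases eq_or_ne u 0 with rfl | hu
    · simp
    have h1 : δ * ‖u‖ ^ 2 ≤ ‖S u‖ * ‖u‖ := by
      refine (hc u).trans ?_
      calc (inner ℂ (S u) u : ℂ).re ≤ ‖(inner ℂ (S u) u : ℂ)‖ := Complex.re_le_norm _
        _ ≤ ‖S u‖ * ‖u‖ := norm_inner_le_norm _ _
    have hun : 0 < ‖u‖ := norm_pos_iff.2 hu
    nlinarith
  have hbound : ∀ u : H, ‖u‖ ≤ ((Real.toNNReal δ⁻¹ : ℝ≥0) : ℝ) * ‖S u‖ := by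
    intro u
    rw [Real.coe_toNNReal _ (by positivity), inv_mul_eq_div, le_div_iff₀ hδ]
    linarith [hlow u]
  have hanti : AntilipschitzWith (Real.toNNReal δ⁻¹) S :=
    ContinuousLinearMap.antilipschitz_of_bound S hbound
  have hker : S.ker = ⊥ := by
    rw [LinearMap.ker_eq_bot']
    intro u hu
    rw [ContinuousLinearMap.coe_coe] at hu
    have := hlow u
    rw [hu, norm_zero] at this
    have : ‖u‖ ≤ 0 := by nlinarith
    exact norm_le_zero_iff.1 this
  have hclosed : IsClosed (Set.range S) := hanti.isClosed_range S.uniformContinuous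
  have hcl2 : IsClosed ((S.range : Submodule ℂ H) : Set H) := by
    rw [LinearMap.coe_range]; exact hclosed
  haveI : CompleteSpace (S.range) := hcl2.completeSpace_coe
  have horth : (S.range)ᗮ = ⊥ := by
    rw [Submodule.eq_bot_iff]
    intro v hv
    have h0 : (inner ℂ (S v) v : ℂ) = 0 :=
      (Submodule.mem_orthogonal _ _).1 hv (S v) (LinearMap.mem_range_self _ v)
    have := hc v
    rw [h0] at this
    simp only [Complex.zero_re] at this
    have : ‖v‖ ^ 2 ≤ 0 := by nlinarith
    have : ‖v‖ = 0 := by nlinarith [norm_nonneg v, sq_nonneg ‖v‖]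
    exact norm_eq_zero.1 this
  have hrange : S.range = ⊤ := Submodule.orthogonal_eq_bot_iff.1 horth
  let E := ContinuousLinearEquiv.ofBijective S hker hrange
  refine ⟨⟨S, (E.symm : H →L[ℂ] H), ?_, ?_⟩, rfl⟩
  · ext x
    show S (E.symm x) = x
    have : S (E.symm x) = E (E.symm x) := rfl
    rw [this, E.apply_symm_apply]
  · ext x
    show E.symm (S x) = x
    have : S x = E x := rfl
    rw [this, E.symm_apply_apply]

end HW

namespace HW

lemma inner_L2 (f g : Lp ℂ 2 μm) : (inner ℂ f g : ℂ) = ∫ x, conj (f x) * g x ∂μm := by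
  rw [MeasureTheory.L2.inner_def]
  refine integral_congr_ae (Filter.Eventually.of_forall fun x => ?_)
  simp [RCLike.inner_apply]
  ring

/-- the constant function 1 in L². -/
def one2 : Lp ℂ 2 μm := fourierLp 2 0

lemma coeFn_one2 : ⇑(one2) =ᵐ[μm] fun _ => (1 : ℂ) :=
  (coeFn_fourierLp 2 0).trans (Filter.Eventually.of_forall fun x => fourier_zero)

lemma fourierCoeff_one2 (n : ℤ) :
    fourierCoeff (⇑one2) n = if n = 0 then 1 else 0 := by
  rw [fourierCoeff_congr coeFn_one2]
  unfold fourierCoeff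
  rcases eq_or_ne n 0 with rfl | hn
  · rw [if_pos rfl]
    have : (∫ x : Circ, fourier (-0) x • (1 : ℂ) ∂μm) = ∫ _ : Circ, (1 : ℂ) ∂μm :=
      integral_congr_ae (Filter.Eventually.of_forall fun x => by
        show fourier (-0) x • (1 : ℂ) = 1
        rw [neg_zero, fourier_zero, smul_eq_mul, one_mul])
    rw [this, integral_const, probReal_univ, one_smul]
  · rw [if_neg hn]
    have : (∫ x : Circ, fourier (-n) x • (1 : ℂ) ∂μm) = ∫ x : Circ, fourier (-n) x ∂μm :=
      integral_congr_ae (Filter.Eventually.of_forall fun x => by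
        show fourier (-n) x • (1 : ℂ) = fourier (-n) x
        rw [smul_eq_mul, mul_one])
    rw [this, integral_fourier (neg_ne_zero.2 hn)]

lemma hardy_one2 : Hardy one2 := fun n hn => by
  rw [fourierCoeff_one2, if_neg (by omega)]

end HW

namespace HW

lemma hPg (P : Lp ℂ 2 μm →L[ℂ] Lp ℂ 2 μm)
    (hPorth : ∀ f g : Lp ℂ 2 μm, Hardy g → (inner ℂ (f - P f) g : ℂ) = 0)
    (F g : Lp ℂ 2 μm) (hg : Hardy g) : (inner ℂ g (P F) : ℂ) = inner ℂ g F := by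
  have h2 : (inner ℂ g (F - P F) : ℂ) = 0 := by
    rw [← inner_conj_symm, hPorth F g hg, map_zero]
  rw [inner_sub_right] at h2
  exact (sub_eq_zero.mp h2).symm

lemma hPg2 (P : Lp ℂ 2 μm →L[ℂ] Lp ℂ 2 μm)
    (hPorth : ∀ f g : Lp ℂ 2 μm, Hardy g → (inner ℂ (f - P f) g : ℂ) = 0)
    (F g : Lp ℂ 2 μm) (hg : Hardy g) : (inner ℂ (P F) g : ℂ) = inner ℂ F g := by
  have h2 := hPorth F g hg
  rw [inner_sub_left] at h2
  exact (sub_eq_zero.mp h2).symm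

variable {H : Type} [NormedAddCommGroup H] [InnerProductSpace ℂ H] [CompleteSpace H]

lemma part1
    (e : H →ₗᵢ[ℂ] Lp ℂ 2 μm)
    (hrange : ∀ u : H, Hardy (e u))
    (honto : ∀ f : Lp ℂ 2 μm, Hardy f → ∃ u : H, e u = f)
    (ξ : Circ → ℝ) (hξ : MemLp ξ ⊤ μm)
    (P : Lp ℂ 2 μm →L[ℂ] Lp ℂ 2 μm)
    (hPfix : ∀ f, Hardy f → P f = f)
    (hPorth : ∀ f g : Lp ℂ 2 μm, Hardy g → (inner ℂ (f - P f) g : ℂ) = 0)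
    (Mξ : Lp ℂ 2 μm →L[ℂ] Lp ℂ 2 μm)
    (hMξ : ∀ g : Lp ℂ 2 μm, ⇑(Mξ g) =ᵐ[μm] fun x => (ξ x : ℂ) * g x)
    (T : H →L[ℂ] H) (hT : ∀ u : H, e (T u) = P (Mξ (e u)))
    (c : ℝ) (hc : (c : ℂ) ∉ spectrum ℂ T) :
    (∀ᵐ x ∂μm, 0 < ξ x - c) ∨ (∀ᵐ x ∂μm, ξ x - c < 0) := by
  obtain ⟨u₁, hu₁⟩ := honto one2 hardy_one2
  have hU : IsUnit (algebraMap ℂ (H →L[ℂ] H) (c : ℂ) - T) := spectrum.notMem_iff.mp hc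
  set u : H := (↑hU.unit⁻¹ : H →L[ℂ] H) (-u₁) with hu
  have heq : (algebraMap ℂ (H →L[ℂ] H) (c : ℂ) - T) u = -u₁ := by
    calc (algebraMap ℂ (H →L[ℂ] H) (c : ℂ) - T) u
        = (↑hU.unit : H →L[ℂ] H) ((↑hU.unit⁻¹ : H →L[ℂ] H) (-u₁)) := by rw [hU.unit_spec, hu]
      _ = ((↑hU.unit * ↑hU.unit⁻¹ : H →L[ℂ] H)) (-u₁) := rfl
      _ = (1 : H →L[ℂ] H) (-u₁) := by rw [Units.mul_inv]
      _ = -u₁ := rfl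
  have heq2 : T u - (c : ℂ) • u = u₁ := by
    rw [Algebra.algebraMap_eq_smul_one] at heq
    have h2 : (c : ℂ) • u - T u = -u₁ := by
      simpa [ContinuousLinearMap.sub_apply, ContinuousLinearMap.smul_apply] using heq
    have h3 : -(T u - (c : ℂ) • u) = -u₁ := by rw [neg_sub]; exact h2
    exact neg_injective h3
  set f : Lp ℂ 2 μm := e u with hfdef
  have hfH : Hardy f := hrange u
  have hPMf : P (Mξ f) - (c : ℂ) • f = one2 := by
    have h4 := congrArg e heq2
    rw [e.map_sub, e.map_smul, hT, hu₁] at h4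
    exact h4
  set F : Lp ℂ 2 μm := Mξ f - (c : ℂ) • f with hFdef
  have hPF : P F = one2 := by
    rw [hFdef, ContinuousLinearMap.map_sub, ContinuousLinearMap.map_smul, hPfix f hfH]
    exact hPMf
  have hFcoe : ⇑F =ᵐ[μm] fun x => ((ξ x : ℂ) - c) * f x := by
    filter_upwards [Lp.coeFn_sub (Mξ f) ((c : ℂ) • f), Lp.coeFn_smul (c : ℂ) f, hMξ f]
      with x hx1 hx2 hx3
    rw [hFdef]
    simp only [Pi.sub_apply] at hx1
    rw [hx1, hx2, hx3]
    simp only [Pi.smul_apply, smul_eq_mul]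
    ring
  have hkey : ∀ g : Lp ℂ 2 μm, Hardy g → (inner ℂ g F : ℂ) = conj (fourierCoeff (⇑g) 0) := by
    intro g hg
    rw [← hPg P hPorth F g hg, hPF, inner_L2]
    have h1 : ∫ x, conj (g x) * one2 x ∂μm = ∫ x, conj (g x) ∂μm := by
      refine integral_congr_ae ?_
      filter_upwards [coeFn_one2] with x hx
      rw [hx, mul_one]
    rw [h1, integral_conj]
    congr 1
    unfold fourierCoeff
    refine integral_congr_ae (Filter.Eventually.of_forall fun x => ?_)
    show g x = fourier (-0) x • g x
    norm_num [fourier_zero]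
  set hfun : Circ → ℝ := fun x => (ξ x - c) * ‖f x‖ ^ 2 with hhfun
  have hmc : ∀ x, conj (f x) * f x = ((‖f x‖ ^ 2 : ℝ) : ℂ) := by
    intro x
    rw [mul_comm, Complex.mul_conj, Complex.normSq_eq_norm_sq]
  have hcoeffs : ∀ n : ℤ, fourierCoeff (fun x => (hfun x : ℂ)) n = (inner ℂ (mulF n f) F : ℂ) := by
    intro n
    rw [inner_L2]
    unfold fourierCoeff
    refine integral_congr_ae ?_
    filter_upwards [coeFn_mulF n f, hFcoe] with x hx1 hx2
    show fourier (-n) x • ((hfun x : ℝ) : ℂ) = conj ((mulF n f) x) * F x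
    rw [hx1, hx2, map_mul, ← fourier_neg, smul_eq_mul]
    calc fourier (-n) x * ((hfun x : ℝ) : ℂ)
        = fourier (-n) x * (((ξ x : ℝ) : ℂ) - (c : ℂ)) * (conj (f x) * f x) := by
          rw [hmc x, hhfun]; push_cast; ring
      _ = fourier (-n) x * conj (f x) * (((ξ x : ℂ)) - c) * f x := by ring
      _ = _ := by ring
  have hpos : ∀ n : ℤ, 0 ≤ n → (inner ℂ (mulF n f) F : ℂ) = conj (fourierCoeff (⇑f) (-n)) := by
    intro n hn
    rw [hkey _ (hardy_mulF hn hfH), fourierCoeff_mulF, zero_sub]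
  have hvanish : ∀ n : ℤ, n ≠ 0 → fourierCoeff (fun x => (hfun x : ℂ)) n = 0 := by
    intro n hn
    rcases lt_or_gt_of_ne hn with hneg | hposn
    · have hsym := fourierCoeff_real_symm hfun (-n)
      rw [neg_neg] at hsym
      rw [hsym, hcoeffs (-n), hpos (-n) (by omega)]
      simp only [neg_neg]
      rw [hfH n hneg]
      simp
    · rw [hcoeffs n, hpos n (by omega), hfH (-n) (by omega), map_zero]
  obtain ⟨Cb, hCb⟩ : ∃ Cb : ℝ, ∀ᵐ x ∂μm, ‖ξ x - c‖ ≤ Cb := by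
    refine ⟨((eLpNormEssSup ξ μm).toNNReal : ℝ) + ‖c‖, ?_⟩
    have hlt : eLpNormEssSup ξ μm ≠ ⊤ := by
      have h5 := hξ.2
      rw [eLpNorm_exponent_top, lt_top_iff_ne_top] at h5
      exact h5
    filter_upwards [ae_le_eLpNormEssSup (f := ξ) (μ := μm)] with x hx
    have h2 : ‖ξ x‖ ≤ ((eLpNormEssSup ξ μm).toNNReal : ℝ) := by
      have h6 := ENNReal.toNNReal_mono hlt hx
      rw [enorm_eq_nnnorm, ENNReal.toNNReal_coe] at h6
      exact_mod_cast NNReal.coe_le_coe.2 h6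
    calc ‖ξ x - c‖ ≤ ‖ξ x‖ + ‖c‖ := norm_sub_le _ _
      _ ≤ _ := by linarith
  have hsqint : Integrable (fun x => ‖f x‖ ^ 2) μm := by
    have h2 := (Lp.memLp f).integrable_norm_rpow two_ne_zero ENNReal.ofNat_ne_top
    refine h2.congr (Filter.Eventually.of_forall fun x => ?_)
    show ‖f x‖ ^ (ENNReal.toReal 2) = ‖f x‖ ^ (2 : ℕ)
    rw [ENNReal.toReal_ofNat, ← Real.rpow_natCast ‖f x‖ 2]
    norm_num
  have hfunint : Integrable hfun μm := by
    rw [hhfun]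
    exact hsqint.bdd_mul (hξ.aestronglyMeasurable.sub aestronglyMeasurable_const) hCb
  have hconst := ae_const_of_fourierCoeff hfun hfunint hvanish
  set K : ℝ := ∫ y, hfun y ∂μm with hKdef
  have hKne : K ≠ 0 := by
    intro hK0
    have hone : (inner ℂ one2 F : ℂ) = 1 := by
      rw [hkey one2 hardy_one2, fourierCoeff_one2, if_pos rfl, map_one]
    have hzero : (inner ℂ one2 F : ℂ) = 0 := by
      rw [inner_L2, show (0 : ℂ) = ∫ (_ : Circ), (0 : ℂ) ∂μm by rw [integral_zero]]
      refine integral_congr_ae ?_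
      filter_upwards [coeFn_one2, hFcoe, hconst] with x h1 h2 h3
      rw [h1, h2, map_one, one_mul]
      have h4 : (ξ x - c) * ‖f x‖ ^ 2 = 0 := by
        have := h3
        rw [hK0] at this
        exact this
      rcases eq_or_ne (f x) 0 with hf0 | hf0
      · rw [hf0, mul_zero]
      · have hn : ‖f x‖ ^ 2 ≠ 0 := pow_ne_zero _ (norm_ne_zero_iff.2 hf0)
        have h5 : ξ x - c = 0 := (mul_eq_zero.mp h4).resolve_right hn
        have h6 : ((ξ x : ℂ)) - c = 0 := by
          have : ((ξ x - c : ℝ) : ℂ) = ((0 : ℝ) : ℂ) := congrArg _ h5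
          push_cast at this
          exact this
        rw [h6, zero_mul]
    rw [hone] at hzero
    exact one_ne_zero hzero
  rcases hKne.lt_or_gt with hnegK | hposK
  · right
    filter_upwards [hconst] with x hx
    have hx' : (ξ x - c) * ‖f x‖ ^ 2 = K := hx
    by_contra hge
    push_neg at hge
    nlinarith [mul_nonneg hge (sq_nonneg ‖f x‖), hx']
  · left
    filter_upwards [hconst] with x hx
    have hx' : (ξ x - c) * ‖f x‖ ^ 2 = K := hx
    by_contra hle
    push_neg at hle
    nlinarith [mul_nonneg (neg_nonneg.2 hle) (sq_nonneg ‖f x‖), hx']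

end HW

namespace HW

lemma integral_ofReal' (f : Circ → ℝ) :
    ∫ x, ((f x : ℝ) : ℂ) ∂μm = ((∫ x, f x ∂μm : ℝ) : ℂ) := integral_ofReal

lemma conj_mul_self (z : ℂ) : conj z * z = ((‖z‖ ^ 2 : ℝ) : ℂ) := by
  rw [mul_comm, Complex.mul_conj, Complex.normSq_eq_norm_sq]

lemma sq_int (f : Lp ℂ 2 μm) : Integrable (fun x => ‖f x‖ ^ 2) μm := by
  have h2 := (Lp.memLp f).integrable_norm_rpow two_ne_zero ENNReal.ofNat_ne_top
  refine h2.congr (Filter.Eventually.of_forall fun x => ?_)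
  show ‖f x‖ ^ (ENNReal.toReal 2) = ‖f x‖ ^ (2 : ℕ)
  rw [ENNReal.toReal_ofNat, ← Real.rpow_natCast ‖f x‖ 2]
  norm_num

lemma norm_sq_L2 (f : Lp ℂ 2 μm) : ‖f‖ ^ 2 = ∫ x, ‖f x‖ ^ 2 ∂μm := by
  rw [← inner_self_eq_norm_sq (𝕜 := ℂ) f, inner_L2]
  have h : ∫ x, conj (f x) * f x ∂μm = ∫ x, ((‖f x‖ ^ 2 : ℝ) : ℂ) ∂μm :=
    integral_congr_ae (Filter.Eventually.of_forall fun x => conj_mul_self _)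
  rw [h, integral_ofReal' (fun x => ‖f x‖ ^ 2)]
  simp

variable {H : Type} [NormedAddCommGroup H] [InnerProductSpace ℂ H] [CompleteSpace H]

lemma quad
    (e : H →ₗᵢ[ℂ] Lp ℂ 2 μm) (hrange : ∀ u : H, Hardy (e u))
    (ξ : Circ → ℝ)
    (P : Lp ℂ 2 μm →L[ℂ] Lp ℂ 2 μm)
    (hPorth : ∀ f g : Lp ℂ 2 μm, Hardy g → (inner ℂ (f - P f) g : ℂ) = 0)
    (Mξ : Lp ℂ 2 μm →L[ℂ] Lp ℂ 2 μm)
    (hMξ : ∀ g : Lp ℂ 2 μm, ⇑(Mξ g) =ᵐ[μm] fun x => (ξ x : ℂ) * g x)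
    (T : H →L[ℂ] H) (hT : ∀ u : H, e (T u) = P (Mξ (e u))) (u : H) :
    (inner ℂ (T u) u : ℂ) = ((∫ x, ξ x * ‖(e u) x‖ ^ 2 ∂μm : ℝ) : ℂ) := by
  have h1 : (inner ℂ (T u) u : ℂ) = inner ℂ (e (T u)) (e u) := (e.inner_map_map _ _).symm
  rw [h1, hT, hPg2 P hPorth _ _ (hrange u), inner_L2]
  have h2 : ∫ x, conj ((Mξ (e u)) x) * (e u) x ∂μm
      = ∫ x, ((ξ x * ‖(e u) x‖ ^ 2 : ℝ) : ℂ) ∂μm := by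
    refine integral_congr_ae ?_
    filter_upwards [hMξ (e u)] with x hx
    show conj ((Mξ (e u)) x) * (e u) x = _
    rw [hx, map_mul, Complex.conj_ofReal, mul_assoc, conj_mul_self]
    push_cast
    ring
  rw [h2, integral_ofReal' (fun x => ξ x * ‖(e u) x‖ ^ 2)]

lemma selfadj
    (e : H →ₗᵢ[ℂ] Lp ℂ 2 μm) (hrange : ∀ u : H, Hardy (e u))
    (ξ : Circ → ℝ)
    (P : Lp ℂ 2 μm →L[ℂ] Lp ℂ 2 μm)
    (hPorth : ∀ f g : Lp ℂ 2 μm, Hardy g → (inner ℂ (f - P f) g : ℂ) = 0)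
    (Mξ : Lp ℂ 2 μm →L[ℂ] Lp ℂ 2 μm)
    (hMξ : ∀ g : Lp ℂ 2 μm, ⇑(Mξ g) =ᵐ[μm] fun x => (ξ x : ℂ) * g x)
    (T : H →L[ℂ] H) (hT : ∀ u : H, e (T u) = P (Mξ (e u))) :
    IsSelfAdjoint T := by
  rw [ContinuousLinearMap.isSelfAdjoint_iff_isSymmetric]
  intro u v
  show (inner ℂ (T u) v : ℂ) = inner ℂ u (T v)
  calc (inner ℂ (T u) v : ℂ) = inner ℂ (e (T u)) (e v) := (e.inner_map_map _ _).symm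
    _ = inner ℂ (Mξ (e u)) (e v) := by rw [hT]; exact hPg2 P hPorth _ _ (hrange v)
    _ = inner ℂ (e u) (Mξ (e v)) := by
        rw [inner_L2, inner_L2]
        refine integral_congr_ae ?_
        filter_upwards [hMξ (e u), hMξ (e v)] with x h1 h2
        show conj ((Mξ (e u)) x) * (e v) x = conj ((e u) x) * (Mξ (e v)) x
        rw [h1, h2, map_mul, Complex.conj_ofReal]
        ring
    _ = inner ℂ (e u) (P (Mξ (e v))) := (hPg P hPorth _ _ (hrange u)).symm
    _ = inner ℂ (e u) (e (T v)) := by rw [hT]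
    _ = inner ℂ u (T v) := e.inner_map_map _ _

end HW


/-- Hartman–Wintner theorem: for a real-valued `ξ ∈ L^∞(𝕋)`, the Toeplitz operator
`T_ξ = P₊(ξ ·)` on `H²` (realized as an operator `T` on a Hilbert space `H` isometrically
identified with `H² ⊂ L²(𝕋)`) has the property that whenever `μ ∈ ℝ` is outside its
spectrum, `ξ - μ` has constant sign a.e.; consequently its spectrum equals
`[ess inf ξ, ess sup ξ]`. -/
theorem hartman_wintner {H : Type} [NormedAddCommGroup H] [InnerProductSpace ℂ H]
    [CompleteSpace H]
    (e : H →ₗᵢ[ℂ] Lp ℂ 2 μm)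
    (hrange : ∀ u : H, Hardy (e u))
    (honto : ∀ f : Lp ℂ 2 μm, Hardy f → ∃ u : H, e u = f)
    (ξ : Circ → ℝ) (hξ : MemLp ξ ⊤ μm)
    (P : Lp ℂ 2 μm →L[ℂ] Lp ℂ 2 μm)
    (hPrange : ∀ f, Hardy (P f))
    (hPfix : ∀ f, Hardy f → P f = f)
    (hPorth : ∀ f g : Lp ℂ 2 μm, Hardy g → (inner ℂ (f - P f) g : ℂ) = 0)
    (Mξ : Lp ℂ 2 μm →L[ℂ] Lp ℂ 2 μm)
    (hMξ : ∀ g : Lp ℂ 2 μm, ⇑(Mξ g) =ᵐ[μm] fun x => (ξ x : ℂ) * g x)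
    (T : H →L[ℂ] H) (hT : ∀ u : H, e (T u) = P (Mξ (e u))) :
    (∀ c : ℝ, (c : ℂ) ∉ spectrum ℂ T →
      ((∀ᵐ x ∂μm, 0 < ξ x - c) ∨ (∀ᵐ x ∂μm, ξ x - c < 0))) ∧
    spectrum ℂ T = (fun t : ℝ => (t : ℂ)) '' Set.Icc (essInf ξ μm) (essSup ξ μm) := by
  
  have hpart1 : ∀ c : ℝ, (c : ℂ) ∉ spectrum ℂ T →
      ((∀ᵐ x ∂μm, 0 < ξ x - c) ∨ (∀ᵐ x ∂μm, ξ x - c < 0)) :=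
    fun c hc => HW.part1 e hrange honto ξ hξ P hPfix hPorth Mξ hMξ T hT c hc
  refine ⟨hpart1, ?_⟩
  set a := essInf ξ μm with ha
  set b := essSup ξ μm with hb
  have hsa : IsSelfAdjoint T := HW.selfadj e hrange ξ P hPorth Mξ hMξ T hT
  obtain ⟨C, hC⟩ : ∃ C : ℝ, ∀ᵐ x ∂μm, |ξ x| ≤ C := by
    refine ⟨((eLpNormEssSup ξ μm).toNNReal : ℝ), ?_⟩
    have hlt : eLpNormEssSup ξ μm ≠ ⊤ := by
      have h5 := hξ.2
      rw [eLpNorm_exponent_top, lt_top_iff_ne_top] at h5; exact h5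
    filter_upwards [ae_le_eLpNormEssSup (f := ξ) (μ := μm)] with x hx
    have h6 := ENNReal.toNNReal_mono hlt hx
    rw [enorm_eq_nnnorm, ENNReal.toNNReal_coe] at h6
    have h7 := NNReal.coe_le_coe.2 h6
    rw [coe_nnnorm, Real.norm_eq_abs] at h7
    exact h7
  haveI hne : (ae μm).NeBot := ae_neBot.mpr (IsProbabilityMeasure.ne_zero μm)
  have hbddA : Filter.IsBoundedUnder (· ≤ ·) (ae μm) ξ :=
    ⟨C, Filter.eventually_map.2 (hC.mono fun x hx => le_trans (le_abs_self _) hx)⟩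
  have hbddB : Filter.IsBoundedUnder (· ≥ ·) (ae μm) ξ :=
    ⟨-C, Filter.eventually_map.2 (hC.mono fun x hx => by
      have := neg_abs_le (ξ x); linarith)⟩
  have haeb : ∀ᵐ x ∂μm, ξ x ≤ b := ae_le_essSup hbddA
  have haea : ∀ᵐ x ∂μm, a ≤ ξ x := ae_essInf_le hbddB
  have hab : a ≤ b := by
    obtain ⟨x, h1, h2⟩ := (haea.and haeb).exists
    linarith
  have hquadre : ∀ u : H, (inner ℂ (T u) u : ℂ).re = ∫ x, ξ x * ‖(e u) x‖ ^ 2 ∂μm := by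
    intro u
    rw [HW.quad e hrange ξ P hPorth Mξ hMξ T hT u]
    simp
  have hintu : ∀ u : H, Integrable (fun x => ξ x * ‖(e u) x‖ ^ 2) μm := fun u =>
    (HW.sq_int (e u)).bdd_mul hξ.aestronglyMeasurable
      (hC.mono fun x hx => by rwa [Real.norm_eq_abs])
  have hnormsq : ∀ u : H, ‖u‖ ^ 2 = ∫ x, ‖(e u) x‖ ^ 2 ∂μm := fun u => by
    rw [← HW.norm_sq_L2 (e u), e.norm_map]
  have hupper : ∀ u : H, (inner ℂ (T u) u : ℂ).re ≤ b * ‖u‖ ^ 2 := by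
    intro u
    rw [hquadre u, hnormsq u, ← integral_const_mul]
    refine integral_mono_ae (hintu u) ((HW.sq_int (e u)).const_mul b) ?_
    filter_upwards [haeb] with x hx
    exact mul_le_mul_of_nonneg_right hx (sq_nonneg _)
  have hlower : ∀ u : H, a * ‖u‖ ^ 2 ≤ (inner ℂ (T u) u : ℂ).re := by
    intro u
    rw [hquadre u, hnormsq u, ← integral_const_mul]
    refine integral_mono_ae ((HW.sq_int (e u)).const_mul a) (hintu u) ?_
    filter_upwards [haea] with x hx
    exact mul_le_mul_of_nonneg_right hx (sq_nonneg _)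
  have hself : ∀ u : H, ((inner ℂ u u : ℂ)).re = ‖u‖ ^ 2 := fun u => by
    have h8 := inner_self_eq_norm_sq (𝕜 := ℂ) (E := H) u
    simpa using h8
  have hscal : ∀ (r : ℝ) (u : H),
      (inner ℂ ((T - algebraMap ℂ (H →L[ℂ] H) (r : ℂ)) u) u : ℂ).re
        = (inner ℂ (T u) u : ℂ).re - r * ‖u‖ ^ 2 := by
    intro r u
    have h1 : (inner ℂ ((algebraMap ℂ (H →L[ℂ] H) (r : ℂ)) u) u : ℂ) = (r : ℂ) * inner ℂ u u := by
      rw [Algebra.algebraMap_eq_smul_one, ContinuousLinearMap.smul_apply,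
        ContinuousLinearMap.one_apply, inner_smul_left, Complex.conj_ofReal]
    have h2 : ((r : ℂ) * (inner ℂ u u : ℂ)).re = r * ‖u‖ ^ 2 := by
      rw [Complex.mul_re, Complex.ofReal_re, Complex.ofReal_im, zero_mul, sub_zero, hself u]
    rw [ContinuousLinearMap.sub_apply, inner_sub_left, Complex.sub_re, h1, h2]
  have hsub : spectrum ℂ T ⊆ (fun t : ℝ => (t : ℂ)) '' Set.Icc a b := by
    intro z hz
    have hzre : z = (z.re : ℂ) := hsa.mem_spectrum_eq_re hz
    refine ⟨z.re, ⟨?_, ?_⟩, hzre.symm⟩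
    · by_contra hlt
      push_neg at hlt
      have hunit : IsUnit (T - algebraMap ℂ (H →L[ℂ] H) (z.re : ℂ)) := by
        refine HW.isUnit_of_coercive _ (δ := a - z.re) (by linarith) fun u => ?_
        rw [hscal z.re u]
        have h9 := hlower u
        nlinarith [sq_nonneg ‖u‖]
      have hb2 : IsUnit (algebraMap ℂ (H →L[ℂ] H) z - T) := by
        rw [hzre, ← neg_sub]
        exact hunit.neg
      exact (spectrum.notMem_iff.mpr hb2) hz
    · by_contra hlt
      push_neg at hlt
      have hunit : IsUnit (algebraMap ℂ (H →L[ℂ] H) (z.re : ℂ) - T) := by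
        refine HW.isUnit_of_coercive _ (δ := z.re - b) (by linarith) fun u => ?_
        have h10 : (algebraMap ℂ (H →L[ℂ] H) (z.re : ℂ) - T) u
            = -((T - algebraMap ℂ (H →L[ℂ] H) (z.re : ℂ)) u) := by
          simp only [ContinuousLinearMap.sub_apply, neg_sub]
        rw [h10, inner_neg_left, Complex.neg_re, hscal z.re u]
        have h9 := hupper u
        nlinarith [sq_nonneg ‖u‖]
      have hb2 : IsUnit (algebraMap ℂ (H →L[ℂ] H) z - T) := by rwa [hzre]
      exact (spectrum.notMem_iff.mpr hb2) hz
  have hIoo : ∀ t : ℝ, a < t → t < b → (t : ℂ) ∈ spectrum ℂ T := by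
    intro t h1 h2
    by_contra hts
    rcases hpart1 t hts with hp | hp
    · have h3 : ∀ᵐ x ∂μm, t ≤ ξ x := hp.mono fun x hx => by linarith
      have h4 : t ≤ a := by
        rw [ha]
        exact Filter.le_liminf_of_le hbddA.isCoboundedUnder_ge h3
      linarith
    · have h3 : ∀ᵐ x ∂μm, ξ x ≤ t := hp.mono fun x hx => by linarith
      have h4 : b ≤ t := by
        rw [hb]
        exact Filter.limsup_le_of_le hbddB.isCoboundedUnder_le h3
      linarith
  rcases eq_or_lt_of_le hab with heq | hltab
  · have hconstξ : ∀ᵐ x ∂μm, ξ x = a := by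
      filter_upwards [haea, haeb] with x h1 h2
      linarith
    have hTeq : T = algebraMap ℂ (H →L[ℂ] H) (a : ℂ) := by
      ext u
      apply e.injective
      rw [hT u]
      have hMeq : Mξ (e u) = (a : ℂ) • (e u) := by
        apply Lp.ext
        filter_upwards [hMξ (e u), Lp.coeFn_smul ((a : ℂ)) (e u), hconstξ] with x h1 h2 h3
        rw [h1, h2]
        show (ξ x : ℂ) * (e u) x = ((a : ℂ) • ⇑(e u)) x
        rw [Pi.smul_apply, smul_eq_mul, h3]
      rw [hMeq, P.map_smul, hPfix _ (hrange u), ← e.map_smul]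
      congr 1
    haveI : Nontrivial H := by
      obtain ⟨u₁, hu₁⟩ := honto HW.one2 HW.hardy_one2
      refine ⟨u₁, 0, fun h0 => ?_⟩
      have h1 : HW.one2 = 0 := by rw [← hu₁, h0, map_zero]
      have h2 := HW.fourierCoeff_one2 0
      rw [if_pos rfl, h1] at h2
      have h3 : fourierCoeff (⇑(0 : Lp ℂ 2 μm)) 0 = 0 := by
        rw [HW.fourierCoeff_congr (Lp.coeFn_zero ℂ 2 μm)]
        unfold fourierCoeff
        simp
      rw [h3] at h2
      exact zero_ne_one h2
    haveI : Nontrivial (H →L[ℂ] H) := by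
      obtain ⟨v, hv⟩ := exists_ne (0 : H)
      refine ⟨1, 0, fun h0 => hv ?_⟩
      have h9 := congrArg (fun (S : H →L[ℂ] H) => S v) h0
      simpa using h9
    rw [hTeq, spectrum.scalar_eq, ← heq, Set.Icc_self, Set.image_singleton]
  · ext z
    constructor
    · exact fun hz => hsub hz
    · rintro ⟨t, ht, rfl⟩
      have h1 : closure ((fun s : ℝ => (s : ℂ)) '' Set.Ioo a b)
          = (fun s : ℝ => (s : ℂ)) '' Set.Icc a b := by
        rw [Complex.isometry_ofReal.isClosedEmbedding.closure_image_eq, closure_Ioo hltab.ne]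
      have h2 : (fun s : ℝ => (s : ℂ)) '' Set.Ioo a b ⊆ spectrum ℂ T := by
        rintro - ⟨s, hs, rfl⟩
        exact hIoo s hs.1 hs.2
      have h3 := closure_minimal h2 (spectrum.isClosed (𝕜 := ℂ) T)
      rw [h1] at h3
      exact h3 ⟨t, ht, rfl⟩
end
end

section
/- Under the bounded extremal problem hypotheses (f not the trace on I of an admissible function), the deviation M₀(μ) = ‖ψ + b g₀(μ) - h‖_{L²(J)} of the solution satisfies (μ+1)·M₀²(μ) → 0 as μ ↓ -1, and consequently M₀² is integrable near μ = -1: ∫_{-1}^{μ₀} M₀²(μ) dμ < ∞ for every μ₀ > -1. -/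
open MeasureTheory Complex Filter
open scoped Real ENNReal ComplexConjugate
noncomputable section

/-- The boundary point of the unit circle corresponding to `x`. -/
def bd (x : Circ) : ℂ := (AddCircle.toCircle x : ℂ)
/-- Boundary values of the finite Blaschke product with zeros `z j` and phase `φ₀`. -/
def blaschkeBd (N : ℕ) (z : Fin N → ℂ) (φ₀ : ℝ) (x : Circ) : ℂ :=
  Complex.exp (φ₀ * Complex.I) *
    ∏ j, (bd x - z j) / (1 - (starRingEnd ℂ) (z j) * bd x)
/-- The element `χ_J · g` of `L²`. -/
def indLp (J : Set Circ) (hJ : MeasurableSet J) (g : Lp ℂ 2 μm) : Lp ℂ 2 μm :=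
  MemLp.toLp (J.indicator ⇑g) ((Lp.memLp g).indicator hJ)

open scoped Topology in
/-- Moderate growth of the deviation in the bounded extremal problem: under the BEP
hypotheses (with `f` not the trace on `I` of an admissible function), the deviation
`M₀²(μ) = ‖ψ + b g₀(μ) - h‖²_{L²(J)}` satisfies `(μ+1)·M₀²(μ) → 0` as `μ ↓ -1` and is
integrable near `μ = -1`: `∫_{-1}^{μ₀} M₀²(μ) dμ < ∞` for every `μ₀ > -1`. -/
theorem bep_M0_integrable (N : ℕ) (zs : Fin N → ℂ)
    (hzs : ∀ j, ‖zs j‖ < 1) (φ₀ : ℝ)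
    (I : Set Circ) (hIm : MeasurableSet I) (hI : 0 < μm I) (hJ : 0 < μm Iᶜ)
    (ψ : Lp ℂ 2 μm) (hψ : Hardy ψ)
    (f h : Circ → ℂ) (hf : MemLp f 2 (μm.restrict I)) (hh : MemLp h 2 (μm.restrict Iᶜ))
    (hnotrace : ¬ ∃ g : Lp ℂ 2 μm, Hardy g ∧
      f =ᵐ[μm.restrict I] fun x => ψ x + blaschkeBd N zs φ₀ x * g x)
    (P : Lp ℂ 2 μm →L[ℂ] Lp ℂ 2 μm)
    (hPrange : ∀ u, Hardy (P u))
    (hPfix : ∀ u, Hardy u → P u = u)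
    (hPorth : ∀ u g : Lp ℂ 2 μm, Hardy g → (inner ℂ (u - P u) g : ℂ) = 0)
    (φT : Lp ℂ 2 μm →L[ℂ] Lp ℂ 2 μm)
    (hφT : ∀ g, φT g = P (indLp Iᶜ hIm.compl g))
    (w : ℝ → Lp ℂ 2 μm)
    (hw : ∀ t : ℝ, ⇑(w t) =ᵐ[μm] fun x =>
      I.indicator (fun x => conj (blaschkeBd N zs φ₀ x) * (f x - ψ x)) x +
      Iᶜ.indicator (fun x => (1 + t) * conj (blaschkeBd N zs φ₀ x) * (h x - ψ x)) x)
    (g0 : ℝ → Lp ℂ 2 μm)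
    (hg0 : ∀ t : ℝ, -1 < t → g0 t + t • φT (g0 t) = P (w t))
    (e M0sq : ℝ → ℝ)
    (he : ∀ t, e t = ∫ x in I, ‖ψ x + blaschkeBd N zs φ₀ x * (g0 t) x - f x‖ ^ 2 ∂μm)
    (hM : ∀ t, M0sq t =
      ∫ x in Iᶜ, ‖ψ x + blaschkeBd N zs φ₀ x * (g0 t) x - h x‖ ^ 2 ∂μm)
    -- facts established for the bounded extremal problem, used in the proof:
    (htendE : Tendsto e (nhdsWithin (-1) (Set.Ioi (-1))) (nhds 0))
    (hMtop : Tendsto M0sq (nhdsWithin (-1) (Set.Ioi (-1))) atTop)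
    (e' M' : ℝ → ℝ)
    (hderivE : ∀ t : ℝ, -1 < t → HasDerivAt e (e' t) t)
    (hderivM : ∀ t : ℝ, -1 < t → HasDerivAt M0sq (M' t) t)
    (hbal : ∀ t : ℝ, -1 < t → e' t = -(t + 1) * M' t)
    (hopt : ∀ t : ℝ, -1 < t →
      (∫ x in I, (f x - ψ x - blaschkeBd N zs φ₀ x * (g0 t) x) *
          conj (blaschkeBd N zs φ₀ x * (g0 t) x) ∂μm) =
        (1 + t) * (↑(M0sq t) -
          ∫ x in Iᶜ, (h x - ψ x - blaschkeBd N zs φ₀ x * (g0 t) x) *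
            conj (h x - ψ x) ∂μm)) :
    Tendsto (fun t => (t + 1) * M0sq t) (nhdsWithin (-1) (Set.Ioi (-1))) (nhds 0) ∧
    ∀ μ₀ : ℝ, -1 < μ₀ → IntegrableOn M0sq (Set.Ioc (-1) μ₀) := by

  -- The auxiliary function F(t) = e(t) + (t+1) * M0sq(t)
  set F : ℝ → ℝ := fun t => e t + (t + 1) * M0sq t with hFdef
  have hM0nn : ∀ t, 0 ≤ M0sq t := by
    intro t; rw [hM t]; exact integral_nonneg fun x => by positivity
  have henn : ∀ t, 0 ≤ e t := by
    intro t; rw [he t]; exact integral_nonneg fun x => by positivity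
  have hF' : ∀ t : ℝ, -1 < t → HasDerivAt F (M0sq t) t := by
    intro t ht
    have h2 : HasDerivAt (fun t : ℝ => (t + 1) * M0sq t)
        (1 * M0sq t + (t + 1) * M' t) t :=
      ((hasDerivAt_id t).add_const 1).mul (hderivM t ht)
    have h3 := (hderivE t ht).add h2
    have : e' t + (1 * M0sq t + (t + 1) * M' t) = M0sq t := by
      rw [hbal t ht]; ring
    rw [this] at h3; exact h3
  have hMcont : ContinuousOn M0sq (Set.Ioi (-1 : ℝ)) := fun t ht =>
    (hderivM t ht).continuousAt.continuousWithinAt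
  have hFTC : ∀ a b : ℝ, -1 < a → a ≤ b → (∫ t in a..b, M0sq t) = F b - F a := by
    intro a b ha hab
    have hsub : Set.uIcc a b ⊆ Set.Ioi (-1 : ℝ) := by
      rw [Set.uIcc_of_le hab]
      intro x hx; exact lt_of_lt_of_le ha hx.1
    exact intervalIntegral.integral_eq_sub_of_hasDerivAt
      (fun x hx => hF' x (hsub hx)) ((hMcont.mono hsub).intervalIntegrable)
  have hFnn : ∀ t : ℝ, -1 < t → 0 ≤ F t := by
    intro t ht
    exact add_nonneg (henn t) (mul_nonneg (by linarith) (hM0nn t))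
  have hFmono : MonotoneOn F (Set.Ioi (-1 : ℝ)) := by
    intro a ha b hb hab
    have h1 := hFTC a b ha hab
    have h2 : 0 ≤ ∫ t in a..b, M0sq t :=
      intervalIntegral.integral_nonneg hab fun x _ => hM0nn x
    linarith
  -- Integrability near -1
  have hint : ∀ μ₀ : ℝ, -1 < μ₀ → IntegrableOn M0sq (Set.Ioc (-1) μ₀) := by
    intro μ₀ hμ₀
    set a : ℕ → ℝ := fun n => -1 + (μ₀ + 1) / (n + 1) with hadef
    have ha_gt : ∀ n : ℕ, -1 < a n := by
      intro n
      have : 0 < (μ₀ + 1) / ((n : ℝ) + 1) := div_pos (by linarith) (by positivity)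
      simp only [hadef]; linarith
    have ha_le : ∀ n : ℕ, a n ≤ μ₀ := by
      intro n
      have h1 : (μ₀ + 1) / ((n : ℝ) + 1) ≤ μ₀ + 1 := by
        apply div_le_self (by linarith) (by push_cast; linarith [Nat.cast_nonneg (α := ℝ) n])
      simp only [hadef]; linarith
    have hfi : ∀ n : ℕ, IntegrableOn M0sq (Set.Ioc (a n) μ₀) := by
      intro n
      have hsub : Set.uIcc (a n) μ₀ ⊆ Set.Ioi (-1 : ℝ) := by
        rw [Set.uIcc_of_le (ha_le n)]
        intro x hx; exact lt_of_lt_of_le (ha_gt n) hx.1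
      exact ((hMcont.mono hsub).intervalIntegrable).1
    have ha_tend : Tendsto a atTop (𝓝 (-1)) := by
      have h1 : Tendsto (fun n : ℕ => (μ₀ + 1) / ((n : ℝ) + 1)) atTop (𝓝 0) := by
        simpa [div_eq_mul_inv] using
          (tendsto_one_div_add_atTop_nhds_zero_nat.const_mul (μ₀ + 1))
      have := h1.const_add (-1)
      simpa [hadef] using this
    refine integrableOn_Ioc_of_intervalIntegral_norm_bounded_left
      (I := F μ₀) hfi ha_tend (Eventually.of_forall fun n => ?_)
    have hnorm : ∀ x : ℝ, ‖M0sq x‖ = M0sq x := fun x => Real.norm_of_nonneg (hM0nn x)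
    calc (∫ x in Set.Ioc (a n) μ₀, ‖M0sq x‖)
        = ∫ x in Set.Ioc (a n) μ₀, M0sq x := by simp only [hnorm]
      _ = ∫ x in (a n)..μ₀, M0sq x := (intervalIntegral.integral_of_le (ha_le n)).symm
      _ = F μ₀ - F (a n) := hFTC (a n) μ₀ (ha_gt n) (ha_le n)
      _ ≤ F μ₀ := by linarith [hFnn (a n) (ha_gt n)]
  -- The monotone limit of F
  set L : ℝ := sInf (F '' Set.Ioi (-1 : ℝ)) with hLdef
  have hbdd : BddBelow (F '' Set.Ioi (-1 : ℝ)) := by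
    refine ⟨0, ?_⟩
    rintro y ⟨t, ht, rfl⟩
    exact hFnn t ht
  have hFtend : Tendsto F (𝓝[>] (-1)) (𝓝 L) :=
    hFmono.tendsto_nhdsGT hbdd
  have hLnn : 0 ≤ L := by
    refine le_csInf ⟨F 0, ⟨0, by norm_num, rfl⟩⟩ ?_
    rintro y ⟨t, ht, rfl⟩
    exact hFnn t ht
  have hprod : Tendsto (fun t => (t + 1) * M0sq t) (𝓝[>] (-1)) (𝓝 L) := by
    have h1 : Tendsto (fun t => F t - e t) (𝓝[>] (-1)) (𝓝 (L - 0)) :=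
      hFtend.sub htendE
    rw [sub_zero] at h1
    refine h1.congr fun t => ?_
    simp only [hFdef]; ring
  -- L = 0
  have hL0 : L = 0 := by
    by_contra hL
    have hLpos : 0 < L := lt_of_le_of_ne hLnn (Ne.symm hL)
    have hev : ∀ᶠ t in 𝓝[>] (-1 : ℝ), L / 2 < (t + 1) * M0sq t :=
      hprod.eventually (eventually_gt_nhds (by linarith))
    obtain ⟨c, hc, hsub⟩ := mem_nhdsGT_iff_exists_Ioo_subset.mp hev
    have hcgt : (-1 : ℝ) < c := hc
    have hMint : IntegrableOn M0sq (Set.Ioo (-1) c) :=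
      (hint c hcgt).mono_set Set.Ioo_subset_Ioc_self
    have hginteg : IntegrableOn (fun t : ℝ => L / 2 * (t + 1)⁻¹) (Set.Ioo (-1) c) := by
      refine Integrable.mono' hMint ?_ ?_
      · exact (((measurable_id'.add_const 1).inv).const_mul (L / 2)).aestronglyMeasurable
      · rw [ae_restrict_iff' measurableSet_Ioo]
        refine Eventually.of_forall fun t ht => ?_
        have ht1 : 0 < t + 1 := by have := ht.1; linarith
        have hlt : L / 2 < (t + 1) * M0sq t := hsub ht
        have h2 : L / 2 * (t + 1)⁻¹ ≤ M0sq t := by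
          rw [← div_eq_mul_inv, div_le_iff₀ ht1]
          nlinarith
        rw [Real.norm_of_nonneg (by positivity)]
        exact h2
    have hinv : IntegrableOn (fun t : ℝ => (t + 1)⁻¹) (Set.Ioo (-1) c) := by
      have h2 := hginteg.const_mul (L / 2)⁻¹
      refine IntegrableOn.congr_fun h2 (fun t _ => ?_) measurableSet_Ioo
      rw [← mul_assoc, inv_mul_cancel₀ (ne_of_gt (by positivity : (0:ℝ) < L / 2)), one_mul]
    have hII : IntervalIntegrable (fun t : ℝ => (t + 1)⁻¹) volume (-1) c :=
      (intervalIntegrable_iff_integrableOn_Ioo_of_le hcgt.le).mpr hinv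
    have hII2 := hII.comp_add_right (-1)
    have heq : (fun x : ℝ => (x + -1 + 1)⁻¹) = fun x : ℝ => x⁻¹ := by
      funext x; norm_num
    rw [heq, show (-1:ℝ) - -1 = 0 by norm_num, show c - -1 = c + 1 by ring] at hII2
    have hIOO : IntegrableOn (fun x : ℝ => x⁻¹) (Set.Ioo 0 (c + 1)) :=
      (intervalIntegrable_iff_integrableOn_Ioo_of_le (by linarith)).mp hII2
    have hrpow : IntegrableOn (fun x : ℝ => x ^ (-1 : ℝ)) (Set.Ioo 0 (c + 1)) := by
      exact IntegrableOn.congr_fun hIOO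
        (fun x _ => (Real.rpow_neg_one x).symm) measurableSet_Ioo
    have := (intervalIntegral.integrableOn_Ioo_rpow_iff (by linarith : (0:ℝ) < c + 1)).mp hrpow
    linarith
  refine ⟨?_, hint⟩
  rw [← hL0]
  exact hprod
end
end
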